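/- arXiv:2410.09304 — 5 statements merged into one kernel-verified Lean document; each statement's English description precedes it below -/
import Mathlib

section
/- Let G be a connected graph, let c be a locating rainbow coloring of G, and let w ≠ z be vertices such that d(w,y) = d(z,y) for every vertex y ∈ V(G) \ {w,z}. Then c(w) ≠ c(z). -/
open SimpleGraph

/-- A walk is a rainbow vertex path: it is a path and its internal vertices
receive pairwise distinct colors. -/
def IsRainbowPath {V : Type*} (G : SimpleGraph V) {k : ℕ} (c : V → Fin k)
    {u v : V} (p : G.Walk u v) : Prop :=
  p.IsPath ∧ (p.support.tail.dropLast.map c).Nodup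

/-- A rainbow vertex coloring: every two vertices are joined by a rainbow vertex path. -/
def IsRVColoring {V : Type*} (G : SimpleGraph V) {k : ℕ} (c : V → Fin k) : Prop :=
  ∀ u v : V, ∃ p : G.Walk u v, IsRainbowPath G c p

/-- The rainbow vertex connection number. -/
noncomputable def rvc {V : Type*} (G : SimpleGraph V) : ℕ :=
  sInf {k | ∃ c : V → Fin k, IsRVColoring G c}

/-- The rainbow code of a vertex: its vector of distances to the color classes. -/
noncomputable def rainbowCode {V : Type*} (G : SimpleGraph V) {k : ℕ}
    (c : V → Fin k) (v : V) : Fin k → ℕ :=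
  fun i => sInf {d | ∃ w, c w = i ∧ G.dist v w = d}

/-- A locating rainbow coloring: a rainbow vertex coloring whose rainbow codes
are pairwise distinct. -/
def IsLocatingRVColoring {V : Type*} (G : SimpleGraph V) {k : ℕ} (c : V → Fin k) : Prop :=
  IsRVColoring G c ∧ Function.Injective (rainbowCode G c)

/-- The locating rainbow connection number. -/
noncomputable def rvcl {V : Type*} (G : SimpleGraph V) : ℕ :=
  sInf {k | ∃ c : V → Fin k, IsLocatingRVColoring G c}

/-- The edge corona `G ⋄ H`: one copy of `G` together with one copy of `H`
for each edge of `G`, where both endpoints of the edge are joined to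
every vertex of the corresponding copy of `H`. -/
def edgeCorona {V W : Type*} (G : SimpleGraph V) (H : SimpleGraph W) :
    SimpleGraph (V ⊕ (G.edgeSet × W)) where
  Adj x y :=
    match x, y with
    | .inl u, .inl v => G.Adj u v
    | .inl u, .inr (e, _) => u ∈ (e : Sym2 V)
    | .inr (e, _), .inl u => u ∈ (e : Sym2 V)
    | .inr (e, w), .inr (e', w') => e = e' ∧ H.Adj w w'
  symm := by
    constructor
    rintro (u | ⟨e, w⟩) (v | ⟨e', w'⟩) h
    · exact h.symm
    · exact h
    · exact h
    · exact ⟨h.1.symm, h.2.symm⟩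
  loopless := by
    constructor
    rintro (u | ⟨e, w⟩) h
    · exact G.irrefl h
    · exact H.irrefl h.2

/-- A cut vertex: a vertex whose removal disconnects the graph. -/
def IsCutVertex {V : Type*} (G : SimpleGraph V) (v : V) : Prop :=
  ¬ (G.induce {u | u ≠ v}).Connected

theorem stmt2 {V : Type*} (G : SimpleGraph V) (hG : G.Connected) {k : ℕ}
    (c : V → Fin k) (hc : IsLocatingRVColoring G c) (w z : V) (hwz : w ≠ z)
    (h : ∀ y : V, y ≠ w → y ≠ z → G.dist w y = G.dist z y) :
    c w ≠ c z := by
  intro hcwz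
  apply hwz
  apply hc.2
  funext i
  unfold rainbowCode
  congr 1
  ext d
  constructor
  · rintro ⟨x, hx, rfl⟩
    by_cases hxw : x = w
    · subst hxw
      exact ⟨z, hcwz ▸ hx, by rw [SimpleGraph.dist_self, SimpleGraph.dist_self]⟩
    by_cases hxz : x = z
    · subst hxz
      exact ⟨w, hcwz.symm ▸ hx, by simp [SimpleGraph.dist_comm]⟩
    · exact ⟨x, hx, (h x hxw hxz).symm⟩
  · rintro ⟨x, hx, rfl⟩
    by_cases hxw : x = w
    · subst hxw
      exact ⟨z, hcwz ▸ hx, by simp [SimpleGraph.dist_comm]⟩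
    by_cases hxz : x = z
    · subst hxz
      exact ⟨w, hcwz.symm ▸ hx, by rw [SimpleGraph.dist_self, SimpleGraph.dist_self]⟩
    · exact ⟨x, hx, h x hxw hxz⟩
end

section
/- For any connected graphs G_m of order m ≥ 2 and H_n of order n ≥ 2, rvc(G_m ⋄ H_n) ≥ rvc(G_m), where ⋄ denotes the edge corona. -/
open SimpleGraph

section MyAux


variable {V W : Type*} {G : SimpleGraph V} {H : SimpleGraph W}

private lemma my_concat_sublist {α : Type*} {a : α} {l₁ l₂ : List α}
    (h : List.Sublist (l₁ ++ [a]) (l₂ ++ [a])) : List.Sublist l₁ l₂ := by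
  have h' := List.reverse_sublist.mpr h
  simp only [List.reverse_append, List.reverse_cons, List.reverse_nil, List.nil_append,
    List.cons_append] at h'
  exact List.reverse_sublist.mp h'.of_cons_cons

/-- Skip an initial block of `inr` vertices in a walk of the edge corona. -/
private lemma my_corona_skip :
    ∀ (aa bb : V ⊕ (G.edgeSet × W)) (p : (edgeCorona G H).Walk aa bb)
      (x : G.edgeSet × W) (v : V), aa = Sum.inr x → bb = Sum.inl v →
      ∃ b, b ∈ (x.1 : Sym2 V) ∧ ∃ q : (edgeCorona G H).Walk (Sum.inl b) bb,
        q.length < p.length ∧ List.Sublist q.support p.support ∧ (p.IsPath → q.IsPath) := by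
  intro aa bb p
  induction p with
  | nil =>
    intro x v hx hv
    rw [hv] at hx; exact absurd hx (by simp)
  | @cons a b' c h p ih =>
    rintro ⟨e, w⟩ v rfl rfl
    match b' with
    | Sum.inl b =>
      refine ⟨b, h, p, by simp, ?_, fun hp => hp.of_cons⟩
      rw [Walk.support_cons]
      exact List.sublist_cons_self _ _
    | Sum.inr x' =>
      obtain ⟨b, hb, q, hlen, hsub, hpath⟩ := ih x' v rfl rfl
      have he : (⟨e, w⟩ : G.edgeSet × W).1 = x'.1 := h.1
      refine ⟨b, he ▸ hb, q, ?_, ?_, fun hp => hpath hp.of_cons⟩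
      · rw [Walk.length_cons]; omega
      · rw [Walk.support_cons]
        exact hsub.trans (List.sublist_cons_self _ _)

/-- Project a path of the edge corona between `inl` vertices to a walk of `G`. -/
private lemma my_corona_project :
    ∀ (n : ℕ) (aa bb : V ⊕ (G.edgeSet × W)) (p : (edgeCorona G H).Walk aa bb)
      (u v : V), aa = Sum.inl u → bb = Sum.inl v → p.length ≤ n → p.IsPath →
      ∃ q : G.Walk u v, List.Sublist (q.support.map (Sum.inl : V → V ⊕ (G.edgeSet × W))) p.support := by
  intro n
  induction n with
  | zero =>
    intro aa bb p u v h1 h2 hlen hp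
    cases p with
    | nil =>
      subst h1
      obtain rfl : u = v := by injection h2
      exact ⟨Walk.nil, by simp⟩
    | cons h p' => simp [Walk.length_cons] at hlen
  | succ n ih =>
    intro aa bb p u v h1 h2 hlen hp
    cases p with
    | nil =>
      subst h1
      obtain rfl : u = v := by injection h2
      exact ⟨Walk.nil, by simp⟩
    | @cons a b' c h p' =>
      subst h1
      match b' with
      | Sum.inl u' =>
        obtain ⟨q, hsub⟩ := ih _ _ p' u' v rfl h2
          (by rw [Walk.length_cons] at hlen; omega) hp.of_cons
        refine ⟨Walk.cons (show G.Adj u u' from h) q, ?_⟩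
        rw [Walk.support_cons, Walk.support_cons, List.map_cons]
        exact hsub.cons₂ _
      | Sum.inr x =>
        obtain ⟨b, hb, q', hlen', hsub', hpath'⟩ := my_corona_skip _ _ p' x v rfl h2
        have hu : u ∈ (x.1 : Sym2 V) := h
        have hune : u ≠ b := by
          rintro rfl
          have hmem : Sum.inl u ∈ p'.support :=
            hsub'.subset (Walk.start_mem_support q')
          exact ((Walk.cons_isPath_iff h p').mp hp).2 hmem
        have hadj : G.Adj u b := by
          have : (x.1 : Sym2 V) = s(u, b) := (Sym2.mem_and_mem_iff hune).mp ⟨hu, hb⟩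
          exact G.mem_edgeSet.mp (this ▸ x.1.2)
        obtain ⟨q, hsub⟩ := ih _ _ q' b v rfl h2
          (by rw [Walk.length_cons] at hlen; omega)
          (hpath' ((Walk.cons_isPath_iff h p').mp hp).1)
        refine ⟨Walk.cons hadj q, ?_⟩
        rw [Walk.support_cons, Walk.support_cons, List.map_cons]
        exact (hsub.trans hsub').cons₂ _


end MyAux


private lemma my_corona_reach {V W : Type*} {G : SimpleGraph V} {H : SimpleGraph W}
    (hG : G.Connected) (a b : V ⊕ (G.edgeSet × W)) :
    (edgeCorona G H).Reachable a b := by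
  have hf : ∀ u v : V, (edgeCorona G H).Reachable (Sum.inl u) (Sum.inl v) := by
    intro u v
    exact Reachable.map (⟨Sum.inl, fun h => h⟩ : G →g edgeCorona G H)
      (hG.preconnected u v)
  have hstep : ∀ a : V ⊕ (G.edgeSet × W),
      ∃ u : V, (edgeCorona G H).Reachable a (Sum.inl u) := by
    rintro (u | ⟨⟨e, he⟩, w⟩)
    · exact ⟨u, Reachable.refl _⟩
    · induction e using Sym2.ind with
      | _ x y =>
        refine ⟨x, Adj.reachable ?_⟩
        exact Sym2.mem_mk_left x y
  obtain ⟨ua, ha⟩ := hstep a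
  obtain ⟨ub, hb⟩ := hstep b
  exact (ha.trans (hf ua ub)).trans hb.symm

theorem stmt4 {V W : Type*} [Fintype V] [Fintype W] (G : SimpleGraph V) (H : SimpleGraph W)
    (hG : G.Connected) (hH : H.Connected)
    (hm : 2 ≤ Fintype.card V) (hn : 2 ≤ Fintype.card W) :
    rvc G ≤ rvc (edgeCorona G H) := by
  classical
  have hne : {k | ∃ c : (V ⊕ (G.edgeSet × W)) → Fin k,
      IsRVColoring (edgeCorona G H) c}.Nonempty := by
    haveI : Fintype (V ⊕ (G.edgeSet × W)) := Fintype.ofFinite _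
    refine ⟨Fintype.card (V ⊕ (G.edgeSet × W)), fun a => Fintype.equivFin _ a, ?_⟩
    intro a b
    obtain ⟨p⟩ := my_corona_reach (H := H) hG a b
    refine ⟨p.toPath.1, p.toPath.2, ?_⟩
    have hnd : (p.toPath.1).support.Nodup := p.toPath.2.support_nodup
    exact List.Nodup.map (Fintype.equivFin _).injective
      (((List.dropLast_sublist _).trans (List.tail_sublist _)).nodup hnd)
  have hmem := Nat.sInf_mem hne
  obtain ⟨c, hc⟩ := hmem
  apply Nat.sInf_le
  refine ⟨fun v => c (Sum.inl v), ?_⟩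
  intro u v
  obtain ⟨p, hp, hcol⟩ := hc (Sum.inl u) (Sum.inl v)
  obtain ⟨q, hsub⟩ := my_corona_project p.length _ _ p u v rfl rfl le_rfl hp
  have hqpath : q.IsPath := by
    rw [Walk.isPath_def]
    exact (List.Nodup.of_map Sum.inl) (hsub.nodup hp.support_nodup)
  refine ⟨q, hqpath, ?_⟩
  -- reduce from the corona coloring
  have hmap : q.support.tail.dropLast.map (fun v => c (Sum.inl v))
      = ((q.support.map (Sum.inl : V → V ⊕ (G.edgeSet × W))).tail.dropLast).map c := by
    rw [← List.map_tail, ← List.map_dropLast, List.map_map]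
    rfl
  change (List.map (fun v => c (Sum.inl v)) q.support.tail.dropLast).Nodup
  rw [hmap]
  -- tails are sublists
  have htail : List.Sublist ((q.support.map (Sum.inl : V → V ⊕ (G.edgeSet × W))).tail) p.support.tail := by
    have h1 : q.support.map (Sum.inl : V → V ⊕ (G.edgeSet × W))
        = Sum.inl u :: (q.support.tail.map (Sum.inl : V → V ⊕ (G.edgeSet × W))) := by
      conv_lhs => rw [q.support_eq_cons]
      rfl
    have h2 : p.support = Sum.inl u :: p.support.tail := p.support_eq_cons
    rw [h1, h2] at hsub
    rw [h1, List.tail_cons]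
    exact hsub.of_cons_cons
  -- now drop the last elements
  rcases hq0 : (q.support.map (Sum.inl : V → V ⊕ (G.edgeSet × W))).tail with _ | ⟨x, l⟩
  · simp [hq0]
  · have hne1 : (q.support.map (Sum.inl : V → V ⊕ (G.edgeSet × W))).tail ≠ [] := by rw [hq0]; simp
    have hne2 : p.support.tail ≠ [] := by
      intro h0
      rw [h0] at htail
      exact hne1 (List.sublist_nil.mp htail)
    have hg1 : ((q.support.map (Sum.inl : V → V ⊕ (G.edgeSet × W))).tail).getLast hne1 = Sum.inl v := by
      rw [List.getLast_tail, List.getLast_map, q.getLast_support]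
    have hg2 : (p.support.tail).getLast hne2 = Sum.inl v := by
      rw [List.getLast_tail, p.getLast_support]
    have e1 := List.dropLast_append_getLast hne1
    have e2 := List.dropLast_append_getLast hne2
    rw [hg1] at e1
    rw [hg2] at e2
    have hdrop : List.Sublist ((q.support.map (Sum.inl : V → V ⊕ (G.edgeSet × W))).tail.dropLast)
        (p.support.tail.dropLast) := by
      apply my_concat_sublist (a := Sum.inl v)
      rw [e1, e2]
      exact htail
    rw [← hq0] at *
    exact (hdrop.map c).nodup hcol
end

section
/- For any connected graph G_m of order m ≥ 2 and complete graph K_n of order n ≥ 2, rvcl(G_m ⋄ K_n) ≥ n + 1. -/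
open SimpleGraph

section Aux
variable {V W : Type*} {G : SimpleGraph V} {H : SimpleGraph W}

/-- The embedding of `G` into the edge corona as a graph homomorphism. -/
def ecInl (G : SimpleGraph V) (H : SimpleGraph W) : G →g edgeCorona G H :=
  ⟨Sum.inl, fun h => h⟩

lemma edgeCorona_connected (hG : G.Connected) : (edgeCorona G H).Connected := by
  have hne : Nonempty V := hG.nonempty
  obtain ⟨v0⟩ := hne
  have aux : ∀ x : V ⊕ (G.edgeSet × W), (edgeCorona G H).Reachable x (Sum.inl v0) := by
    rintro (u | ⟨⟨e, he⟩, w⟩)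
    · exact (hG.preconnected u v0).map (ecInl G H)
    · induction e with
      | h u v =>
        have h1 : (edgeCorona G H).Adj (Sum.inr (⟨s(u, v), he⟩, w)) (Sum.inl u) :=
          Sym2.mem_mk_left u v
        exact h1.reachable.trans ((hG.preconnected u v0).map (ecInl G H))
  exact { preconnected := fun x y => (aux x).trans (aux y).symm, nonempty := ⟨Sum.inl v0⟩ }

lemma iso_dist_le (f : G →g G) (hG : G.Connected) (x y : V) :
    G.dist (f x) (f y) ≤ G.dist x y := by
  obtain ⟨p, hp⟩ := (hG.preconnected x y).exists_walk_length_eq_dist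
  calc G.dist (f x) (f y) ≤ (p.map f).length := dist_le _
    _ = G.dist x y := by rw [Walk.length_map, hp]

lemma iso_dist (f : G ≃g G) (hG : G.Connected) (x y : V) :
    G.dist (f x) (f y) = G.dist x y := by
  refine le_antisymm (iso_dist_le f.toHom hG x y) ?_
  have := iso_dist_le f.symm.toHom hG (f x) (f y)
  simpa using this


/-- Swapping two vertices of the same copy of `H` (when `H = ⊤`) is a graph automorphism. -/
def twinSwap [DecidableEq V] (G : SimpleGraph V) (n : ℕ) (e : G.edgeSet) (w₁ w₂ : Fin n) :
    edgeCorona G (⊤ : SimpleGraph (Fin n)) ≃g edgeCorona G (⊤ : SimpleGraph (Fin n)) := by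
  set GH := edgeCorona G (⊤ : SimpleGraph (Fin n)) with hGH
  set a₁ : V ⊕ (G.edgeSet × Fin n) := Sum.inr (e, w₁) with ha1
  set a₂ : V ⊕ (G.edgeSet × Fin n) := Sum.inr (e, w₂) with ha2
  set σ := Equiv.swap a₁ a₂ with hσ
  have key : ∀ (w w' : Fin n) (z : V ⊕ (G.edgeSet × Fin n)), z ≠ Sum.inr (e, w') →
      GH.Adj (Sum.inr (e, w)) z → GH.Adj (Sum.inr (e, w')) z := by
    rintro w w' (u | ⟨e', x⟩) hz h
    · exact h
    · obtain ⟨he, -⟩ := h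
      refine ⟨he, ?_⟩
      subst he
      intro hx
      exact hz (by rw [hx])
  have H : ∀ x y, GH.Adj x y → GH.Adj (σ x) (σ y) := by
    intro x y h
    rcases eq_or_ne x a₁ with rfl | hx1 <;> rcases eq_or_ne y a₁ with rfl | hy1
    · exact absurd h (GH.irrefl)
    · rcases eq_or_ne y a₂ with rfl | hy2
      · rw [Equiv.swap_apply_left, Equiv.swap_apply_right]
        exact h.symm
      · rw [Equiv.swap_apply_left, Equiv.swap_apply_of_ne_of_ne hy1 hy2]
        exact key w₁ w₂ y hy2 h
    · rcases eq_or_ne x a₂ with rfl | hx2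
      · rw [Equiv.swap_apply_right, Equiv.swap_apply_left]
        exact h.symm
      · rw [Equiv.swap_apply_left, Equiv.swap_apply_of_ne_of_ne hx1 hx2]
        exact (key w₁ w₂ x hx2 h.symm).symm
    · rcases eq_or_ne x a₂ with rfl | hx2 <;> rcases eq_or_ne y a₂ with rfl | hy2
      · exact absurd h (GH.irrefl)
      · rw [Equiv.swap_apply_right, Equiv.swap_apply_of_ne_of_ne hy1 hy2]
        exact key w₂ w₁ y hy1 h
      · rw [Equiv.swap_apply_right, Equiv.swap_apply_of_ne_of_ne hx1 hx2]
        exact (key w₂ w₁ x hx1 h.symm).symm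
      · rw [Equiv.swap_apply_of_ne_of_ne hx1 hx2, Equiv.swap_apply_of_ne_of_ne hy1 hy2]
        exact h
  refine ⟨σ, ?_⟩
  intro x y
  constructor
  · intro h
    have := H (σ x) (σ y) h
    simpa [hσ, Equiv.swap_apply_self] using this
  · exact H x y

lemma twinSwap_apply [DecidableEq V] (G : SimpleGraph V) (n : ℕ) (e : G.edgeSet) (w₁ w₂ : Fin n)
    (x : V ⊕ (G.edgeSet × Fin n)) :
    (twinSwap G n e w₁ w₂) x = Equiv.swap (Sum.inr (e, w₁)) (Sum.inr (e, w₂)) x := rfl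

lemma twin_code [DecidableEq V] (hG : G.Connected) {n k : ℕ}
    (c : V ⊕ (G.edgeSet × Fin n) → Fin k) (e : G.edgeSet) (w₁ w₂ : Fin n)
    (hc : c (Sum.inr (e, w₁)) = c (Sum.inr (e, w₂))) :
    rainbowCode (edgeCorona G (⊤ : SimpleGraph (Fin n))) c (Sum.inr (e, w₁)) =
      rainbowCode (edgeCorona G (⊤ : SimpleGraph (Fin n))) c (Sum.inr (e, w₂)) := by
  classical
  set GH := edgeCorona G (⊤ : SimpleGraph (Fin n)) with hGH
  have hconn : GH.Connected := edgeCorona_connected hG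
  set a₁ : V ⊕ (G.edgeSet × Fin n) := Sum.inr (e, w₁) with ha1
  set a₂ : V ⊕ (G.edgeSet × Fin n) := Sum.inr (e, w₂) with ha2
  set f := twinSwap G n e w₁ w₂ with hf
  have hfx : ∀ x, f x = Equiv.swap a₁ a₂ x := fun x => twinSwap_apply G n e w₁ w₂ x
  have hcσ : ∀ x, c (f x) = c x := by
    intro x
    rcases eq_or_ne x a₁ with rfl | hx1
    · rw [hfx, Equiv.swap_apply_left]; exact hc.symm
    · rcases eq_or_ne x a₂ with rfl | hx2
      · rw [hfx, Equiv.swap_apply_right]; exact hc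
      · rw [hfx, Equiv.swap_apply_of_ne_of_ne hx1 hx2]
  have hf1 : f a₁ = a₂ := by rw [hfx, Equiv.swap_apply_left]
  have hf2 : f a₂ = a₁ := by rw [hfx, Equiv.swap_apply_right]
  funext i
  show sInf _ = sInf _
  congr 1
  ext d
  simp only [Set.mem_setOf_eq]
  constructor
  · rintro ⟨x, hcx, hdx⟩
    refine ⟨f x, by rw [hcσ]; exact hcx, ?_⟩
    calc GH.dist a₂ (f x) = GH.dist (f a₁) (f x) := by rw [hf1]
      _ = GH.dist a₁ x := iso_dist f hconn a₁ x
      _ = d := hdx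
  · rintro ⟨x, hcx, hdx⟩
    refine ⟨f x, by rw [hcσ]; exact hcx, ?_⟩
    calc GH.dist a₁ (f x) = GH.dist (f a₂) (f x) := by rw [hf2]
      _ = GH.dist a₂ x := iso_dist f hconn a₂ x
      _ = d := hdx

lemma main_lb [Fintype V] [DecidableEq V] (hG : G.Connected) (hm : 2 ≤ Fintype.card V)
    {n k : ℕ} (c : V ⊕ (G.edgeSet × Fin n) → Fin k)
    (hrv : Function.Injective (rainbowCode (edgeCorona G (⊤ : SimpleGraph (Fin n))) c)) :
    n + 1 ≤ k := by
  set GH := edgeCorona G (⊤ : SimpleGraph (Fin n)) with hGH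
  have hconn : GH.Connected := edgeCorona_connected hG
  obtain ⟨u, v, hadj⟩ : ∃ u v : V, G.Adj u v := by
    obtain ⟨a, b, hab⟩ := Fintype.exists_pair_of_one_lt_card (α := V) (by omega)
    obtain ⟨p⟩ := hG.preconnected a b
    cases p with
    | nil => exact absurd rfl hab
    | cons h _ => exact ⟨_, _, h⟩
  set e : G.edgeSet := ⟨s(u, v), G.mem_edgeSet.mpr hadj⟩ with he
  have hinj : Function.Injective (fun w : Fin n => c (Sum.inr (e, w))) := by
    intro w1 w2 h12
    have h := twin_code hG c e w1 w2 h12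
    have h2 := hrv h
    simpa using h2
  have hnk : n ≤ k := by
    simpa using Fintype.card_le_of_injective _ hinj
  by_contra hcon
  have hkn : k = n := le_antisymm (by omega) hnk
  have hsurj : Function.Surjective (fun w : Fin n => c (Sum.inr (e, w))) :=
    ((Fintype.bijective_iff_injective_and_card _).mpr ⟨hinj, by simp [hkn]⟩).surjective
  obtain ⟨w0, hw0⟩ := hsurj (c (Sum.inl u))
  have code_eq : ∀ x : V ⊕ (G.edgeSet × Fin n),
      (∀ w : Fin n, Sum.inr (e, w) = x ∨ GH.Adj x (Sum.inr (e, w))) →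
      rainbowCode GH c x = fun i => if i = c x then 0 else 1 := by
    intro x hx
    funext i
    show sInf {d | ∃ z, c z = i ∧ GH.dist x z = d} = _
    rcases eq_or_ne i (c x) with rfl | hi
    · rw [if_pos rfl]
      exact Nat.sInf_eq_zero.mpr (Or.inl ⟨x, rfl, SimpleGraph.dist_self⟩)
    · rw [if_neg hi]
      obtain ⟨w, hw⟩ := hsurj i
      have hw' : c (Sum.inr (e, w)) = i := hw
      have hne : Sum.inr (e, w) ≠ x := by
        intro hcontra
        rw [hcontra] at hw'
        exact hi hw'.symm
      have hadjx : GH.Adj x (Sum.inr (e, w)) := (hx w).resolve_left hne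
      have h1 : (1 : ℕ) ∈ {d | ∃ z, c z = i ∧ GH.dist x z = d} :=
        ⟨Sum.inr (e, w), hw', SimpleGraph.dist_eq_one_iff_adj.mpr hadjx⟩
      have h0 : (0 : ℕ) ∉ {d | ∃ z, c z = i ∧ GH.dist x z = d} := by
        rintro ⟨z, hz, hdz⟩
        have hxz : x = z := hconn.dist_eq_zero_iff.mp hdz
        rw [← hxz] at hz
        exact hi hz.symm
      refine le_antisymm (Nat.sInf_le h1) (Nat.one_le_iff_ne_zero.mpr fun h => ?_)
      rcases Nat.sInf_eq_zero.mp h with h' | h'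
      · exact h0 h'
      · rw [h'] at h1
        exact h1
  have hcodeu : rainbowCode GH c (Sum.inl u) = fun i => if i = c (Sum.inl u) then 0 else 1 := by
    refine code_eq _ fun w => Or.inr ?_
    show u ∈ (e : Sym2 V)
    exact Sym2.mem_mk_left u v
  have hcodea : rainbowCode GH c (Sum.inr (e, w0)) =
      fun i => if i = c (Sum.inr (e, w0)) then 0 else 1 := by
    refine code_eq _ fun w => ?_
    rcases eq_or_ne w w0 with rfl | hw
    · exact Or.inl rfl
    · exact Or.inr ⟨rfl, by simpa using hw.symm⟩
  have : rainbowCode GH c (Sum.inl u) = rainbowCode GH c (Sum.inr (e, w0)) := by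
    have hw0' : c (Sum.inr (e, w0)) = c (Sum.inl u) := hw0
    rw [hcodeu, hcodea, hw0']
  exact absurd (hrv this) (by simp)

lemma exists_locating (hG : G.Connected) [Finite V] (n : ℕ) :
    ∃ (k : ℕ) (c : V ⊕ (G.edgeSet × Fin n) → Fin k),
      IsRVColoring (edgeCorona G (⊤ : SimpleGraph (Fin n))) c ∧
      Function.Injective (rainbowCode (edgeCorona G (⊤ : SimpleGraph (Fin n))) c) := by
  classical
  set GH := edgeCorona G (⊤ : SimpleGraph (Fin n)) with hGH
  have hconn : GH.Connected := edgeCorona_connected hG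
  have : Finite (V ⊕ (G.edgeSet × Fin n)) := by infer_instance
  refine ⟨Nat.card (V ⊕ (G.edgeSet × Fin n)), Finite.equivFin _, ?_, ?_⟩
  · intro x y
    obtain ⟨p0⟩ := hconn.preconnected x y
    obtain ⟨p, hp⟩ := p0.toPath
    refine ⟨p, hp, ?_⟩
    have hsub : p.support.tail.dropLast.Sublist p.support :=
      (List.dropLast_sublist _).trans (List.tail_sublist _)
    exact (hsub.nodup hp.support_nodup).map (Finite.equivFin _).injective
  · intro x y hxy
    set c := ⇑(Finite.equivFin (V ⊕ (G.edgeSet × Fin n))) with hc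
    have hinj : Function.Injective c := (Finite.equivFin _).injective
    have h1 : rainbowCode GH c x (c x) = 0 :=
      Nat.sInf_eq_zero.mpr (Or.inl ⟨x, rfl, SimpleGraph.dist_self⟩)
    have h2 : rainbowCode GH c y (c x) = GH.dist y x := by
      show sInf _ = _
      have hset : {d | ∃ w, c w = c x ∧ GH.dist y w = d} = {GH.dist y x} := by
        ext d
        simp only [Set.mem_setOf_eq, Set.mem_singleton_iff]
        constructor
        · rintro ⟨w, hw, rfl⟩
          rw [hinj hw]
        · rintro rfl
          exact ⟨x, rfl, rfl⟩
      rw [hset, csInf_singleton]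
    rw [hxy, h2] at h1
    exact (hconn.dist_eq_zero_iff.mp h1).symm

end Aux

theorem stmt5 {V : Type*} [Fintype V] (G : SimpleGraph V) (n : ℕ)
    (hG : G.Connected) (hm : 2 ≤ Fintype.card V) (hn : 2 ≤ n) :
    n + 1 ≤ rvcl (edgeCorona G (⊤ : SimpleGraph (Fin n))) := by
  classical
  refine le_csInf ?_ ?_
  · obtain ⟨k, c, h1, h2⟩ := exists_locating hG n
    exact ⟨k, c, h1, h2⟩
  · rintro k ⟨c, hc⟩
    exact main_lb hG hm c hc.2
end

section
/- The diameter of the edge corona P_m ⋄ K_n of a path of order m ≥ 2 with a complete graph of order n ≥ 2 equals m − 1. -/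
open SimpleGraph

section Aux

variable {m n : ℕ}

/-- abbreviation for the corona graph -/
local notation "C" => edgeCorona (SimpleGraph.pathGraph m) (⊤ : SimpleGraph (Fin n))

lemma edge_rep (e : (SimpleGraph.pathGraph m).edgeSet) :
    ∃ a b : Fin m, a.val + 1 = b.val ∧ (e : Sym2 (Fin m)) = s(a, b) := by
  obtain ⟨e, he⟩ := e
  induction e with
  | _ x y =>
    rw [SimpleGraph.mem_edgeSet, pathGraph_adj] at he
    rcases he with h | h
    · exact ⟨x, y, h, rfl⟩
    · exact ⟨y, x, h, Sym2.eq_swap⟩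

/-- Lipschitz potential -/
noncomputable def fpot : (Fin m ⊕ ((SimpleGraph.pathGraph m).edgeSet × Fin n)) → ℕ
  | .inl u => u.val
  | .inr (e, _) => Sym2.lift ⟨fun a b => min a.val b.val, fun a b => min_comm _ _⟩ (e : Sym2 (Fin m))

lemma fpot_lip {x y : Fin m ⊕ ((SimpleGraph.pathGraph m).edgeSet × Fin n)}
    (h : (C).Adj x y) : fpot x ≤ fpot y + 1 := by
  match x, y with
  | .inl u, .inl v =>
    have := pathGraph_adj.mp h
    simp only [fpot]; omega
  | .inl u, .inr (e, w) =>
    obtain ⟨a, b, hab, he⟩ := edge_rep e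
    have hu : u ∈ (e : Sym2 (Fin m)) := h
    rw [he, Sym2.mem_iff] at hu
    simp only [fpot, he, Sym2.lift_mk]
    rcases hu with rfl | rfl <;> omega
  | .inr (e, w), .inl u =>
    obtain ⟨a, b, hab, he⟩ := edge_rep e
    have hu : u ∈ (e : Sym2 (Fin m)) := h
    rw [he, Sym2.mem_iff] at hu
    simp only [fpot, he, Sym2.lift_mk]
    rcases hu with rfl | rfl <;> omega
  | .inr (e, w), .inr (e', w') =>
    obtain ⟨rfl, -⟩ := h
    simp [fpot]

lemma fpot_walk {x y : Fin m ⊕ ((SimpleGraph.pathGraph m).edgeSet × Fin n)}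
    (p : (C).Walk x y) : fpot x ≤ fpot y + p.length := by
  induction p with
  | nil => simp
  | cons h p ih =>
    have := fpot_lip h
    simp only [SimpleGraph.Walk.length_cons]
    omega

lemma pathWalk (k : ℕ) : ∀ (u v : Fin m), u.val + k = v.val →
    ∃ p : (C).Walk (.inl u) (.inl v), p.length ≤ k := by
  induction k with
  | zero =>
    intro u v h
    have : u = v := Fin.ext (by omega)
    subst this
    exact ⟨.nil, by simp⟩
  | succ k ih =>
    intro u v h
    have hlt : u.val + 1 < m := by omega
    set u' : Fin m := ⟨u.val + 1, by omega⟩ with hu'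
    obtain ⟨p, hp⟩ := ih u' v (by simp [hu']; omega)
    have hadj : (C).Adj (.inl u) (.inl u') := pathGraph_adj.mpr (Or.inl rfl)
    exact ⟨.cons hadj p, by simp [SimpleGraph.Walk.length_cons]; omega⟩

lemma edist_le_nat {x y : Fin m ⊕ ((SimpleGraph.pathGraph m).edgeSet × Fin n)} {k : ℕ}
    (p : (C).Walk x y) (hp : p.length ≤ k) : (C).edist x y ≤ (k : ℕ∞) := by
  refine (SimpleGraph.edist_le p).trans ?_
  exact_mod_cast hp

end Aux

section Aux2
variable {m n : ℕ}
local notation "C" => edgeCorona (SimpleGraph.pathGraph m) (⊤ : SimpleGraph (Fin n))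

lemma edist_inl_inl (hm : 2 ≤ m) (u v : Fin m) :
    (C).edist (.inl u) (.inl v) ≤ ((m - 1 : ℕ) : ℕ∞) := by
  rcases le_total u.val v.val with h | h
  · obtain ⟨p, hp⟩ := pathWalk (n := n) (v.val - u.val) u v (by omega)
    exact edist_le_nat p (by omega)
  · obtain ⟨p, hp⟩ := pathWalk (n := n) (u.val - v.val) v u (by omega)
    rw [SimpleGraph.edist_comm]
    exact edist_le_nat p (by omega)

lemma edist_inl_inr (hm : 2 ≤ m) (u : Fin m) (e : (SimpleGraph.pathGraph m).edgeSet)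
    (w : Fin n) : (C).edist (.inl u) (.inr (e, w)) ≤ ((m - 1 : ℕ) : ℕ∞) := by
  obtain ⟨a, b, hab, he⟩ := edge_rep e
  rcases lt_or_ge u.val b.val with h | h
  · obtain ⟨p, hp⟩ := pathWalk (n := n) (a.val - u.val) u a (by omega)
    have hadj : (C).Adj (.inl a) (.inr (e, w)) := by
      show a ∈ (e : Sym2 (Fin m)); rw [he]; exact Sym2.mem_mk_left a b
    refine edist_le_nat (p.concat hadj) ?_
    rw [SimpleGraph.Walk.length_concat]
    omega
  · obtain ⟨p, hp⟩ := pathWalk (n := n) (u.val - b.val) b u (by omega)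
    have hadj : (C).Adj (.inl b) (.inr (e, w)) := by
      show b ∈ (e : Sym2 (Fin m)); rw [he]; exact Sym2.mem_mk_right a b
    refine edist_le_nat (p.reverse.concat hadj) ?_
    rw [SimpleGraph.Walk.length_concat, SimpleGraph.Walk.length_reverse]
    omega

lemma edist_inr_inr_aux (hm : 2 ≤ m) {e e' : (SimpleGraph.pathGraph m).edgeSet}
    (w w' : Fin n) {a b a' b' : Fin m}
    (hab : a.val + 1 = b.val) (he : (e : Sym2 (Fin m)) = s(a, b))
    (hab' : a'.val + 1 = b'.val) (he' : (e' : Sym2 (Fin m)) = s(a', b'))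
    (hord : b.val ≤ a'.val) :
    (C).edist (.inr (e, w)) (.inr (e', w')) ≤ ((m - 1 : ℕ) : ℕ∞) := by
  obtain ⟨p, hp⟩ := pathWalk (n := n) (a'.val - b.val) b a' (by omega)
  have h1 : (C).Adj (.inr (e, w)) (.inl b) := by
    show b ∈ (e : Sym2 (Fin m)); rw [he]; exact Sym2.mem_mk_right a b
  have h2 : (C).Adj (.inl a') (.inr (e', w')) := by
    show a' ∈ (e' : Sym2 (Fin m)); rw [he']; exact Sym2.mem_mk_left a' b'
  refine edist_le_nat (SimpleGraph.Walk.cons h1 (p.concat h2)) ?_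
  rw [SimpleGraph.Walk.length_cons, SimpleGraph.Walk.length_concat]
  have : b'.val < m := b'.isLt
  omega

lemma edist_all (hm : 2 ≤ m) (x y : Fin m ⊕ ((SimpleGraph.pathGraph m).edgeSet × Fin n)) :
    (C).edist x y ≤ ((m - 1 : ℕ) : ℕ∞) := by
  match x, y with
  | .inl u, .inl v => exact edist_inl_inl hm u v
  | .inl u, .inr (e, w) => exact edist_inl_inr hm u e w
  | .inr (e, w), .inl u => rw [SimpleGraph.edist_comm]; exact edist_inl_inr hm u e w
  | .inr (e, w), .inr (e', w') =>
    by_cases hee : e = e'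
    · subst hee
      by_cases hww : w = w'
      · subst hww; simp [SimpleGraph.edist_self]
      · have hadj : (C).Adj (.inr (e, w)) (.inr (e, w')) := ⟨rfl, by simpa using hww⟩
        refine edist_le_nat hadj.toWalk ?_
        simp only [SimpleGraph.Walk.length_cons, SimpleGraph.Walk.length_nil]
        omega
    · obtain ⟨a, b, hab, he⟩ := edge_rep e
      obtain ⟨a', b', hab', he'⟩ := edge_rep e'
      have hne : a.val ≠ a'.val := by
        intro hc
        apply hee
        apply Subtype.ext
        rw [he, he']
        have : a = a' := Fin.ext hc
        subst this
        have : b = b' := Fin.ext (by omega)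
        subst this
        rfl
      rcases lt_or_gt_of_ne hne with h | h
      · exact edist_inr_inr_aux hm w w' hab he hab' he' (by omega)
      · rw [SimpleGraph.edist_comm]
        exact edist_inr_inr_aux hm w' w hab' he' hab he (by omega)

lemma ediam_eq (hm : 2 ≤ m) (hn : 2 ≤ n) :
    (C).ediam = ((m - 1 : ℕ) : ℕ∞) := by
  refine le_antisymm (SimpleGraph.ediam_le_of_edist_le (edist_all hm)) ?_
  have h0 : (0 : ℕ) < m := by omega
  set u0 : Fin m := ⟨0, h0⟩
  set u1 : Fin m := ⟨m - 1, by omega⟩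
  have key : ((m - 1 : ℕ) : ℕ∞) ≤ (C).edist (.inl u1) (.inl u0) := by
    rw [SimpleGraph.edist]
    refine le_iInf fun p => ?_
    have := fpot_walk p
    simp only [fpot, u0, u1] at this
    exact_mod_cast (by omega : m - 1 ≤ p.length)
  exact key.trans SimpleGraph.edist_le_ediam

end Aux2

theorem stmt12 (m n : ℕ) (hm : 2 ≤ m) (hn : 2 ≤ n) :
    (edgeCorona (SimpleGraph.pathGraph m) (⊤ : SimpleGraph (Fin n))).diam = m - 1 := by
  rw [SimpleGraph.diam, ediam_eq hm hn, ENat.toNat_coe]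
end

section
/- For m ≥ 3 and any graph H_n of order n ≥ 2, rvc(K_m ⋄ H_n) = ⌈m/3⌉. -/
open SimpleGraph

section Aux

open SimpleGraph Walk

private lemma rainbow1 {V : Type*} {G : SimpleGraph V} {k : ℕ} (c : V → Fin k) {u v : V}
    (h : G.Adj u v) : ∃ p : G.Walk u v, IsRainbowPath G c p :=
  ⟨Walk.cons h Walk.nil, by constructor <;> simp [Walk.isPath_def, h.ne]⟩

private lemma rainbow2 {V : Type*} {G : SimpleGraph V} {k : ℕ} (c : V → Fin k) {u x v : V}
    (h1 : G.Adj u x) (h2 : G.Adj x v) (huv : u ≠ v) :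
    ∃ p : G.Walk u v, IsRainbowPath G c p :=
  ⟨Walk.cons h1 (Walk.cons h2 Walk.nil), by
    constructor <;> simp [Walk.isPath_def, h1.ne, h2.ne, huv]⟩

private lemma rainbow3 {V : Type*} {G : SimpleGraph V} {k : ℕ} (c : V → Fin k) {u x y v : V}
    (h1 : G.Adj u x) (h2 : G.Adj x y) (h3 : G.Adj y v) (huv : u ≠ v) (huy : u ≠ y)
    (hxv : x ≠ v) (hcc : c x ≠ c y) :
    ∃ p : G.Walk u v, IsRainbowPath G c p :=
  ⟨Walk.cons h1 (Walk.cons h2 (Walk.cons h3 Walk.nil)), by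
    constructor <;> simp [Walk.isPath_def, h1.ne, h2.ne, h3.ne, huv, huy, hxv, hcc]⟩

private lemma sym2_rep {α : Type*} (s : Sym2 α) : ∃ a b, s = s(a, b) :=
  Sym2.inductionOn s fun a b => ⟨a, b, rfl⟩

private lemma mem_internal {V : Type*} {G : SimpleGraph V} {u v : V} (p : G.Walk u v) {z : V}
    (hz : z ∈ p.support) (h1 : z ≠ u) (h2 : z ≠ v) : z ∈ p.support.tail.dropLast := by
  cases p with
  | nil => simp at hz; exact absurd hz h1
  | cons h q =>
    rw [Walk.support_cons] at hz ⊢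
    simp only [List.tail_cons]
    rcases List.mem_cons.mp hz with rfl | hz'
    · exact absurd rfl h1
    · have hq : q.support ≠ [] := q.support_ne_nil
      have heq : q.support.dropLast ++ [q.support.getLast hq] = q.support :=
        List.dropLast_append_getLast hq
      rw [← heq] at hz'
      rcases List.mem_append.mp hz' with h' | h'
      · exact h'
      · have hv : q.support.getLast hq = v := q.getLast_support
        simp only [List.mem_singleton] at h'
        rw [hv] at h'
        exact absurd h' h2

private lemma cross {V W : Type*} {G : SimpleGraph V} {H : SimpleGraph W}
    {u v : V ⊕ (G.edgeSet × W)} (p : (edgeCorona G H).Walk u v) :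
    ∀ (e e' : G.edgeSet) (w w' : W), u = Sum.inr (e, w) → v = Sum.inr (e', w') → e ≠ e' →
      ∃ x, x ∈ (e : Sym2 V) ∧ Sum.inl x ∈ p.support := by
  induction p with
  | nil =>
    intro e e' w w' hu hv hne
    rw [hu] at hv
    simp only [Sum.inr.injEq, Prod.mk.injEq] at hv
    exact absurd hv.1 hne
  | @cons a b d h q ih =>
    intro e e' w w' hu hv hne
    subst hu
    rcases b with x | ⟨e2, w2⟩
    · exact ⟨x, h, by rw [Walk.support_cons]; exact List.mem_cons_of_mem _ q.start_mem_support⟩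
    · have h' : e = e2 ∧ H.Adj w w2 := h
      obtain ⟨x, hx, hxs⟩ := ih e e' w2 w' (by rw [h'.1]) hv hne
      exact ⟨x, hx, by rw [Walk.support_cons]; exact List.mem_cons_of_mem _ hxs⟩

private lemma four_distinct {α : Type*} [DecidableEq α] (s : Finset α) (h : 3 < s.card) :
    ∃ a b c d, a ∈ s ∧ b ∈ s ∧ c ∈ s ∧ d ∈ s ∧
      a ≠ b ∧ a ≠ c ∧ a ≠ d ∧ b ≠ c ∧ b ≠ d ∧ c ≠ d := by
  obtain ⟨a, ha⟩ := Finset.card_pos.mp (show 0 < s.card by omega)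
  obtain ⟨b, hb⟩ := Finset.card_pos.mp (show 0 < (s.erase a).card by
    rw [Finset.card_erase_of_mem ha]; omega)
  obtain ⟨c, hc⟩ := Finset.card_pos.mp (show 0 < ((s.erase a).erase b).card by
    rw [Finset.card_erase_of_mem hb, Finset.card_erase_of_mem ha]; omega)
  obtain ⟨d, hd⟩ := Finset.card_pos.mp (show 0 < (((s.erase a).erase b).erase c).card by
    rw [Finset.card_erase_of_mem hc, Finset.card_erase_of_mem hb,
      Finset.card_erase_of_mem ha]; omega)
  simp only [Finset.mem_erase] at hb hc hd
  exact ⟨a, b, c, d, ha, hb.2, hc.2.2, hd.2.2.2, hb.1.symm, hc.2.1.symm, hd.2.2.1.symm,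
    hc.1.symm, hd.2.1.symm, hd.1.symm⟩

private lemma upperCol {W : Type*} (H : SimpleGraph W) (m : ℕ) (hm : 3 ≤ m) :
    ∃ c : (Fin m ⊕ ((⊤ : SimpleGraph (Fin m)).edgeSet × W)) → Fin ((m + 2) / 3),
      IsRVColoring (edgeCorona (⊤ : SimpleGraph (Fin m)) H) c := by
  have hk : 0 < (m + 2) / 3 := by omega
  refine ⟨fun z => match z with
    | Sum.inl i => ⟨i.val / 3, by have := i.isLt; omega⟩
    | Sum.inr _ => ⟨0, hk⟩, ?_⟩
  intro u v
  by_cases huv : u = v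
  · exact huv ▸ ⟨Walk.nil, by constructor <;> simp⟩
  rcases u with i | ⟨e, w⟩ <;> rcases v with j | ⟨e', w'⟩
  · -- inl, inl
    have hij : i ≠ j := fun h => huv (by rw [h])
    exact rainbow1 _ hij
  · -- inl, inr
    by_cases hie : i ∈ ((e' : Sym2 (Fin m)))
    · exact rainbow1 _ hie
    · obtain ⟨a, ha⟩ : ∃ a, a ∈ (e' : Sym2 (Fin m)) := ⟨_, Sym2.out_fst_mem _⟩
      have hia : i ≠ a := fun h => hie (h ▸ ha)
      exact rainbow2 _ (show (edgeCorona (⊤ : SimpleGraph (Fin m)) H).Adj (Sum.inl i) (Sum.inl a) from hia)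
        (show (edgeCorona (⊤ : SimpleGraph (Fin m)) H).Adj (Sum.inl a) (Sum.inr (e', w')) from ha)
        (show (Sum.inl i : Fin m ⊕ ((⊤ : SimpleGraph (Fin m)).edgeSet × W)) ≠
          Sum.inr (e', w') by simp)
  · -- inr, inl
    by_cases hje : j ∈ ((e : Sym2 (Fin m)))
    · exact rainbow1 _ hje
    · obtain ⟨a, ha⟩ : ∃ a, a ∈ (e : Sym2 (Fin m)) := ⟨_, Sym2.out_fst_mem _⟩
      have haj : a ≠ j := fun h => hje (h ▸ ha)
      exact rainbow2 _ (show (edgeCorona (⊤ : SimpleGraph (Fin m)) H).Adj (Sum.inr (e, w)) (Sum.inl a) from ha)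
        (show (edgeCorona (⊤ : SimpleGraph (Fin m)) H).Adj (Sum.inl a) (Sum.inl j) from haj)
        (show Sum.inr (e, w) ≠ (Sum.inl j : Fin m ⊕ ((⊤ : SimpleGraph (Fin m)).edgeSet × W))
          by simp)
  · -- inr, inr
    by_cases hee : e = e'
    · subst hee
      obtain ⟨a, ha⟩ : ∃ a, a ∈ (e : Sym2 (Fin m)) := ⟨_, Sym2.out_fst_mem _⟩
      exact rainbow2 _ (show (edgeCorona (⊤ : SimpleGraph (Fin m)) H).Adj (Sum.inr (e, w)) (Sum.inl a) from ha)
        (show (edgeCorona (⊤ : SimpleGraph (Fin m)) H).Adj (Sum.inl a) (Sum.inr (e, w')) from ha) huv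
    · by_cases hsh : ∃ x, x ∈ (e : Sym2 (Fin m)) ∧ x ∈ (e' : Sym2 (Fin m))
      · obtain ⟨x, hx, hx'⟩ := hsh
        exact rainbow2 _ (show (edgeCorona (⊤ : SimpleGraph (Fin m)) H).Adj (Sum.inr (e, w)) (Sum.inl x) from hx)
          (show (edgeCorona (⊤ : SimpleGraph (Fin m)) H).Adj (Sum.inl x) (Sum.inr (e', w')) from hx') huv
      · push_neg at hsh
        obtain ⟨a, b, hab⟩ := sym2_rep (e : Sym2 (Fin m))
        obtain ⟨a', b', hab'⟩ := sym2_rep (e' : Sym2 (Fin m))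
        have hab2 : a ≠ b := by
          have h2 := e.2
          rw [hab] at h2
          simpa using h2
        have hab2' : a' ≠ b' := by
          have h2 := e'.2
          rw [hab'] at h2
          simpa using h2
        have hae : a ∈ (e : Sym2 (Fin m)) := by rw [hab]; exact Sym2.mem_iff.mpr (Or.inl rfl)
        have hbe : b ∈ (e : Sym2 (Fin m)) := by rw [hab]; exact Sym2.mem_iff.mpr (Or.inr rfl)
        have hae' : a' ∈ (e' : Sym2 (Fin m)) := by rw [hab']; exact Sym2.mem_iff.mpr (Or.inl rfl)
        have hbe' : b' ∈ (e' : Sym2 (Fin m)) := by rw [hab']; exact Sym2.mem_iff.mpr (Or.inr rfl)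
        have key : ∃ x y, x ∈ (e : Sym2 (Fin m)) ∧ y ∈ (e' : Sym2 (Fin m)) ∧
            (x : Fin m).val / 3 ≠ (y : Fin m).val / 3 := by
          by_contra hcon
          push_neg at hcon
          have h1 := hcon a a' hae hae'
          have h2 := hcon a b' hae hbe'
          have h3 := hcon b a' hbe hae'
          have d1 : (a : ℕ) ≠ b := Fin.val_ne_of_ne hab2
          have d2 : (a' : ℕ) ≠ b' := Fin.val_ne_of_ne hab2'
          have d3 : (a : ℕ) ≠ a' := Fin.val_ne_of_ne (fun h => hsh a hae (h ▸ hae'))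
          have d4 : (a : ℕ) ≠ b' := Fin.val_ne_of_ne (fun h => hsh a hae (h ▸ hbe'))
          have d5 : (b : ℕ) ≠ a' := Fin.val_ne_of_ne (fun h => hsh b hbe (h ▸ hae'))
          have d6 : (b : ℕ) ≠ b' := Fin.val_ne_of_ne (fun h => hsh b hbe (h ▸ hbe'))
          omega
        obtain ⟨x, y, hxe, hye, hxy⟩ := key
        have hxyne : x ≠ y := fun h => hxy (by rw [h])
        exact rainbow3 _ (show (edgeCorona (⊤ : SimpleGraph (Fin m)) H).Adj (Sum.inr (e, w)) (Sum.inl x) from hxe)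
          (show (edgeCorona (⊤ : SimpleGraph (Fin m)) H).Adj (Sum.inl x) (Sum.inl y) from hxyne)
          (show (edgeCorona (⊤ : SimpleGraph (Fin m)) H).Adj (Sum.inl y) (Sum.inr (e', w')) from hye) huv
          (show Sum.inr (e, w) ≠
            (Sum.inl y : Fin m ⊕ ((⊤ : SimpleGraph (Fin m)).edgeSet × W)) by simp)
          (show (Sum.inl x : Fin m ⊕ ((⊤ : SimpleGraph (Fin m)).edgeSet × W)) ≠
            Sum.inr (e', w') by simp)
          (fun h => hxy (congrArg Fin.val h))

private lemma lowerCol {W : Type*} (H : SimpleGraph W) (m : ℕ) (hm : 3 ≤ m)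
    (hW : Nonempty W) (k : ℕ)
    (c : (Fin m ⊕ ((⊤ : SimpleGraph (Fin m)).edgeSet × W)) → Fin k)
    (hc : IsRVColoring (edgeCorona (⊤ : SimpleGraph (Fin m)) H) c) :
    (m + 2) / 3 ≤ k := by
  by_contra hcon
  have h3k : Fintype.card (Fin k) * 3 < Fintype.card (Fin m) := by
    simp only [Fintype.card_fin]; omega
  obtain ⟨α, hα⟩ :=
    Fintype.exists_lt_card_fiber_of_mul_lt_card (fun i : Fin m => c (Sum.inl i)) h3k
  obtain ⟨a, b, a', b', haM, hbM, haM', hbM', hab, haa', hab', hba', hbb', hab2⟩ :=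
    four_distinct _ hα
  simp only [Finset.mem_filter] at haM hbM haM' hbM'
  have he : s(a, b) ∈ (⊤ : SimpleGraph (Fin m)).edgeSet := by
    rw [SimpleGraph.mem_edgeSet]; simpa using hab
  have he' : s(a', b') ∈ (⊤ : SimpleGraph (Fin m)).edgeSet := by
    rw [SimpleGraph.mem_edgeSet]; simpa using hab2
  have hee : (⟨s(a, b), he⟩ : (⊤ : SimpleGraph (Fin m)).edgeSet) ≠ ⟨s(a', b'), he'⟩ := by
    intro h
    have h2 : s(a, b) = s(a', b') := congrArg Subtype.val h
    rw [Sym2.eq_iff] at h2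
    rcases h2 with ⟨h1, _⟩ | ⟨h1, _⟩
    · exact haa' h1
    · exact hab' h1
  obtain ⟨w0⟩ := hW
  obtain ⟨p, hp, hnd⟩ := hc (Sum.inr (⟨s(a, b), he⟩, w0)) (Sum.inr (⟨s(a', b'), he'⟩, w0))
  obtain ⟨x, hxe, hxs⟩ := cross p _ _ w0 w0 rfl rfl hee
  obtain ⟨y, hye, hys'⟩ := cross p.reverse _ _ w0 w0 rfl rfl (Ne.symm hee)
  have hys : Sum.inl y ∈ p.support := by
    rwa [SimpleGraph.Walk.support_reverse, List.mem_reverse] at hys'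
  have hxI : Sum.inl x ∈ p.support.tail.dropLast :=
    mem_internal p hxs (by simp) (by simp)
  have hyI : Sum.inl y ∈ p.support.tail.dropLast :=
    mem_internal p hys (by simp) (by simp)
  have hxab : x = a ∨ x = b := by simpa [Sym2.mem_iff] using hxe
  have hyab : y = a' ∨ y = b' := by simpa [Sym2.mem_iff] using hye
  have hxy : (Sum.inl x : Fin m ⊕ ((⊤ : SimpleGraph (Fin m)).edgeSet × W)) ≠ Sum.inl y := by
    simp only [ne_eq, Sum.inl.injEq]
    rcases hxab with rfl | rfl <;> rcases hyab with rfl | rfl <;> assumption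
  have hcx : c (Sum.inl x) = α := by
    rcases hxab with rfl | rfl
    · exact haM.2
    · exact hbM.2
  have hcy : c (Sum.inl y) = α := by
    rcases hyab with rfl | rfl
    · exact haM'.2
    · exact hbM'.2
  exact hxy (List.inj_on_of_nodup_map hnd hxI hyI (by rw [hcx, hcy]))

end Aux


theorem stmt16 {W : Type*} [Fintype W] (H : SimpleGraph W) (m n : ℕ)
    (hm : 3 ≤ m) (hn : Fintype.card W = n) (hn2 : 2 ≤ n) :
    rvc (edgeCorona (⊤ : SimpleGraph (Fin m)) H) = (m + 2) / 3 := by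
  have hW : Nonempty W := Fintype.card_pos_iff.mp (by omega)
  unfold rvc
  apply le_antisymm
  · exact Nat.sInf_le (upperCol H m hm)
  · exact le_csInf ⟨(m + 2) / 3, upperCol H m hm⟩
      (fun k hk => by obtain ⟨c, hc⟩ := hk; exact lowerCol H m hm hW k c hc)
end
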